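/- Let L be convolution with an even, positive, integrable kernel K with ∫K = 1, and let μ ∈ ℝ. If φ₁ is a bounded continuous supersolution (−μφ₁ + Lφ₁ + φ₁² ≤ 0), then inf φ₁ lies in the closed interval with endpoints μ−1 and 0; if φ₂ is a bounded continuous subsolution (−μφ₂ + Lφ₂ + φ₂² ≥ 0), then sup φ₂ lies outside the open interval with endpoints μ−1 and 0. -/

import Mathlib

open MeasureTheory

private lemma conv_ge_inf (K : ℝ → ℝ) (hKpos : ∀ x, 0 < K x)
    (hKint : MeasureTheory.Integrable K) (hK1 : (∫ x, K x) = 1)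
    (f : ℝ → ℝ) (hc : Continuous f) (M : ℝ) (hb : ∀ x, |f x| ≤ M) (x : ℝ) :
    sInf (Set.range f) ≤ ∫ y, K (x - y) * f y := by
  set m := sInf (Set.range f) with hm
  have hbdd : BddBelow (Set.range f) := ⟨-M, by rintro _ ⟨z, rfl⟩; linarith [abs_le.1 (hb z) |>.1]⟩
  have hmle : ∀ y, m ≤ f y := fun y => csInf_le hbdd ⟨y, rfl⟩
  have hKx : Integrable (fun y => K (x - y)) := hKint.comp_sub_left x
  have hint : Integrable (fun y => K (x - y) * f y) := by
    have := hKx.bdd_mul (c := M) (f := f)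
      (hc.aestronglyMeasurable) (Filter.Eventually.of_forall fun y => by
        simpa using hb y)
    simpa [mul_comm] using this
  have hconst : Integrable (fun y => K (x - y) * m) := hKx.mul_const m
  have h1 : (∫ y, K (x - y) * m) ≤ ∫ y, K (x - y) * f y := by
    apply integral_mono hconst hint
    intro y
    exact mul_le_mul_of_nonneg_left (hmle y) (hKpos _).le
  have h2 : (∫ y, K (x - y) * m) = m := by
    rw [integral_mul_const, integral_sub_left_eq_self K volume x, hK1, one_mul]
  linarith

private lemma conv_le_sup (K : ℝ → ℝ) (hKpos : ∀ x, 0 < K x)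
    (hKint : MeasureTheory.Integrable K) (hK1 : (∫ x, K x) = 1)
    (f : ℝ → ℝ) (hc : Continuous f) (M : ℝ) (hb : ∀ x, |f x| ≤ M) (x : ℝ) :
    (∫ y, K (x - y) * f y) ≤ sSup (Set.range f) := by
  set s := sSup (Set.range f) with hs
  have hbdd : BddAbove (Set.range f) := ⟨M, by rintro _ ⟨z, rfl⟩; linarith [abs_le.1 (hb z) |>.2]⟩
  have hmle : ∀ y, f y ≤ s := fun y => le_csSup hbdd ⟨y, rfl⟩
  have hKx : Integrable (fun y => K (x - y)) := hKint.comp_sub_left x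
  have hint : Integrable (fun y => K (x - y) * f y) := by
    have := hKx.bdd_mul (c := M) (f := f)
      (hc.aestronglyMeasurable) (Filter.Eventually.of_forall fun y => by
        simpa using hb y)
    simpa [mul_comm] using this
  have hconst : Integrable (fun y => K (x - y) * s) := hKx.mul_const s
  have h1 : (∫ y, K (x - y) * f y) ≤ ∫ y, K (x - y) * s := by
    apply integral_mono hint hconst
    intro y
    exact mul_le_mul_of_nonneg_left (hmle y) (hKpos _).le
  have h2 : (∫ y, K (x - y) * s) = s := by
    rw [integral_mul_const, integral_sub_left_eq_self K volume x, hK1, one_mul]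
  linarith

theorem whitham_apriori_bounds (K : ℝ → ℝ) (μ : ℝ)
    (hKe : ∀ x, K (-x) = K x) (hKpos : ∀ x, 0 < K x)
    (hKint : MeasureTheory.Integrable K) (hK1 : (∫ x, K x) = 1)
    (φ₁ φ₂ : ℝ → ℝ)
    (hc1 : Continuous φ₁) (hb1 : ∃ M, ∀ x, |φ₁ x| ≤ M)
    (hc2 : Continuous φ₂) (hb2 : ∃ M, ∀ x, |φ₂ x| ≤ M)
    (hsuper : ∀ x, -μ * φ₁ x + (∫ y, K (x-y) * φ₁ y) + φ₁ x ^ 2 ≤ 0)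
    (hsub : ∀ x, 0 ≤ -μ * φ₂ x + (∫ y, K (x-y) * φ₂ y) + φ₂ x ^ 2) :
    sInf (Set.range φ₁) ∈ Set.uIcc (μ-1) 0 ∧
    sSup (Set.range φ₂) ∉ Set.uIoo (μ-1) 0 := by
  obtain ⟨M₁, hb1⟩ := hb1
  obtain ⟨M₂, hb2⟩ := hb2
  constructor
  · set m := sInf (Set.range φ₁) with hm
    -- pointwise quadratic inequality
    have hq : ∀ x, φ₁ x ^ 2 - μ * φ₁ x + m ≤ 0 := fun x => by
      have h1 := conv_ge_inf K hKpos hKint hK1 φ₁ hc1 M₁ hb1 x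
      have h2 := hsuper x
      nlinarith
    -- take a sequence realizing the infimum
    have hne : (Set.range φ₁).Nonempty := ⟨φ₁ 0, 0, rfl⟩
    have hbdd : BddBelow (Set.range φ₁) :=
      ⟨-M₁, by rintro _ ⟨z, rfl⟩; linarith [abs_le.1 (hb1 z) |>.1]⟩
    obtain ⟨u, -, hu, humem⟩ := exists_seq_tendsto_sInf hne hbdd
    have hkey : m ^ 2 - μ * m + m ≤ 0 := by
      have hcont : Continuous (fun t : ℝ => t ^ 2 - μ * t + m) := by continuity
      have htend : Filter.Tendsto (fun n => (u n) ^ 2 - μ * (u n) + m)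
          Filter.atTop (nhds (m ^ 2 - μ * m + m)) := (hcont.tendsto m).comp hu
      refine le_of_tendsto htend (Filter.Eventually.of_forall fun n => ?_)
      obtain ⟨x, hx⟩ := humem n
      rw [← hx]; exact hq x
    rw [Set.uIcc, Set.mem_Icc]
    constructor
    · rcases le_total (μ - 1) 0 with h | h
      · simp only [min_eq_left h]
        nlinarith
      · simp only [min_eq_right h]
        nlinarith
    · rcases le_total (μ - 1) 0 with h | h
      · simp only [max_eq_right h]
        nlinarith
      · simp only [max_eq_left h]
        nlinarith
  · set s := sSup (Set.range φ₂) with hs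
    have hq : ∀ x, 0 ≤ φ₂ x ^ 2 - μ * φ₂ x + s := fun x => by
      have h1 := conv_le_sup K hKpos hKint hK1 φ₂ hc2 M₂ hb2 x
      have h2 := hsub x
      nlinarith
    have hne : (Set.range φ₂).Nonempty := ⟨φ₂ 0, 0, rfl⟩
    have hbdd : BddAbove (Set.range φ₂) :=
      ⟨M₂, by rintro _ ⟨z, rfl⟩; linarith [abs_le.1 (hb2 z) |>.2]⟩
    obtain ⟨u, -, hu, humem⟩ := exists_seq_tendsto_sSup hne hbdd
    have hkey : 0 ≤ s ^ 2 - μ * s + s := by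
      have hcont : Continuous (fun t : ℝ => t ^ 2 - μ * t + s) := by continuity
      have htend : Filter.Tendsto (fun n => (u n) ^ 2 - μ * (u n) + s)
          Filter.atTop (nhds (s ^ 2 - μ * s + s)) := (hcont.tendsto s).comp hu
      refine ge_of_tendsto htend (Filter.Eventually.of_forall fun n => ?_)
      obtain ⟨x, hx⟩ := humem n
      rw [← hx]; exact hq x
    intro hmem
    rw [Set.uIoo, Set.mem_Ioo] at hmem
    obtain ⟨hlo, hhi⟩ := hmem
    rcases le_total (μ - 1) 0 with h | h
    · simp only [min_eq_left h] at hlo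
      simp only [max_eq_right h] at hhi
      nlinarith
    · simp only [min_eq_right h] at hlo
      simp only [max_eq_left h] at hhi
      nlinarith
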